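/- (Monotonicity of the p-Laplacian vector field, case 1 < p < 2.) For every p with 1 < p < 2 there exists a constant α_p > 0 such that for all ξ, ξ' ∈ ℝⁿ with |ξ| + |ξ'| ≠ 0: ( |ξ|^{p−2}ξ − |ξ'|^{p−2}ξ' ) · (ξ − ξ') ≥ α_p · |ξ − ξ'|² / ( |ξ| + |ξ'| )^{2−p}, where · denotes the Euclidean inner product on ℝⁿ and |·| the Euclidean norm. -/

import Mathlib

private lemma oneLeK (p a b : ℝ) (hp2 : p < 2) (ha : 0 < a) (hb : 0 ≤ b) :
    1 ≤ (a + b) ^ (2 - p) * a ^ (p - 2) := by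
  have hap : 0 < a ^ (p - 2) := Real.rpow_pos_of_pos ha _
  have h1 : a ^ (2 - p) ≤ (a + b) ^ (2 - p) :=
    Real.rpow_le_rpow ha.le (by linarith) (by linarith)
  have h2 : a ^ (2 - p) * a ^ (p - 2) = 1 := by
    rw [← Real.rpow_add ha]; norm_num
  calc 1 = a ^ (2 - p) * a ^ (p - 2) := h2.symm
    _ ≤ (a + b) ^ (2 - p) * a ^ (p - 2) := by
        exact mul_le_mul_of_nonneg_right h1 hap.le

private lemma mvt (p a b : ℝ) (hp1 : 1 < p) (hp2 : p < 2) (hb : 0 ≤ b) (hba : b ≤ a)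
    (ha : 0 < a) : (p - 1) * a ^ (p - 2) * (a - b) ≤ a ^ (p - 1) - b ^ (p - 1) := by
  have hgm : b ^ (p - 1) * a ^ (2 - p) ≤ (p - 1) * b + (2 - p) * a :=
    Real.geom_mean_le_arith_mean2_weighted (by linarith) (by linarith) hb ha.le (by ring)
  have hap : 0 < a ^ (p - 2) := Real.rpow_pos_of_pos ha _
  have h1 : a ^ (2 - p) * a ^ (p - 2) = 1 := by
    rw [← Real.rpow_add ha]; norm_num
  have h2 : a ^ (p - 2) * a = a ^ (p - 1) := by
    rw [← Real.rpow_add_one ha.ne' (p - 2), show p - 2 + 1 = p - 1 by ring]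
  have h3 := mul_le_mul_of_nonneg_right hgm hap.le
  have h4 : b ^ (p - 1) ≤ ((p - 1) * b + (2 - p) * a) * a ^ (p - 2) := by
    have e : b ^ (p - 1) * a ^ (2 - p) * a ^ (p - 2) = b ^ (p - 1) := by
      rw [mul_assoc, h1, mul_one]
    linarith [e ▸ h3]
  nlinarith [h4, h2, hap]

private lemma partA (p a b : ℝ) (hp1 : 1 < p) (hp2 : p < 2) (hb : 0 ≤ b) (hba : b ≤ a)
    (hab : 0 < a + b) :
    (p - 1) * (a - b) ^ 2 ≤ (a + b) ^ (2 - p) * ((a ^ (p - 1) - b ^ (p - 1)) * (a - b)) := by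
  have ha : 0 < a := by linarith
  have habp : 0 < (a + b) ^ (2 - p) := Real.rpow_pos_of_pos hab _
  have hm := mvt p a b hp1 hp2 hb hba ha
  have hK := oneLeK p a b hp2 ha hb
  have h1 : (p - 1) * a ^ (p - 2) * (a - b) * ((a + b) ^ (2 - p)) ≤
      (a ^ (p - 1) - b ^ (p - 1)) * ((a + b) ^ (2 - p)) :=
    mul_le_mul_of_nonneg_right hm habp.le
  have hpb : 0 ≤ (p - 1) * (a - b) :=
    mul_nonneg (by linarith) (by linarith)
  have h2 : (p - 1) * (a - b) * 1 ≤ (p - 1) * (a - b) * ((a + b) ^ (2 - p) * a ^ (p - 2)) :=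
    mul_le_mul_of_nonneg_left hK hpb
  have h3 : (p - 1) * (a - b) ≤ (a ^ (p - 1) - b ^ (p - 1)) * ((a + b) ^ (2 - p)) := by
    nlinarith [h1, h2]
  have h4 := mul_le_mul_of_nonneg_right h3 (by linarith : (0:ℝ) ≤ a - b)
  nlinarith [h4]

private lemma key (p a b t : ℝ) (hp1 : 1 < p) (hp2 : p < 2) (ha : 0 ≤ a) (hb : 0 ≤ b)
    (hab : 0 < a + b) (ht : |t| ≤ a * b) :
    (p - 1) * (a ^ 2 - 2 * t + b ^ 2) ≤
      (a ^ (p - 2) * a ^ 2 - (a ^ (p - 2) + b ^ (p - 2)) * t + b ^ (p - 2) * b ^ 2) *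
        (a + b) ^ (2 - p) := by
  have habp : 0 < (a + b) ^ (2 - p) := Real.rpow_pos_of_pos hab _
  have hxid : ∀ x : ℝ, 0 ≤ x → x ^ (p - 2) * x = x ^ (p - 1) := by
    intro x hx
    rcases hx.eq_or_lt with h | h
    · rw [← h, Real.zero_rpow (by linarith), Real.zero_rpow (by linarith), zero_mul]
    · rw [← Real.rpow_add_one h.ne' (p - 2), show p - 2 + 1 = p - 1 by ring]
  have hBt : 0 ≤ a * b - t := by
    have := (abs_le.mp ht).2; linarith
  -- part B
  have hB : (p - 1) * (2 * (a * b - t)) ≤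
      (a + b) ^ (2 - p) * ((a ^ (p - 2) + b ^ (p - 2)) * (a * b - t)) := by
    rcases ha.eq_or_lt with h0 | ha'
    · have hab0 : a * b = 0 := by rw [← h0]; ring
      have ht0 : t = 0 := by
        have := abs_nonneg t; have := ht; rw [hab0] at this
        have := abs_le.mp (this); linarith [abs_nonneg t, le_antisymm (hab0 ▸ ht) (abs_nonneg t), abs_eq_zero.mp (le_antisymm (hab0 ▸ ht) (abs_nonneg t))]
      rw [hab0, ht0]; simp
    rcases hb.eq_or_lt with h0 | hb'
    · have hab0 : a * b = 0 := by rw [← h0]; ring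
      have ht0 : t = 0 :=
        abs_eq_zero.mp (le_antisymm (hab0 ▸ ht) (abs_nonneg t))
      rw [hab0, ht0]; simp
    · have h1 := oneLeK p a b hp2 ha' hb
      have h2 := oneLeK p b a hp2 hb' ha
      rw [add_comm b a] at h2
      have hcoef : 2 ≤ (a + b) ^ (2 - p) * (a ^ (p - 2) + b ^ (p - 2)) := by
        nlinarith [h1, h2]
      nlinarith [mul_le_mul_of_nonneg_right hcoef hBt]
  -- part A (wlog)
  have hA : (p - 1) * (a - b) ^ 2 ≤
      (a + b) ^ (2 - p) * ((a ^ (p - 1) - b ^ (p - 1)) * (a - b)) := by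
    rcases le_total b a with h | h
    · exact partA p a b hp1 hp2 hb h hab
    · have := partA p b a hp1 hp2 ha h (by linarith)
      have e1 : (b - a) ^ 2 = (a - b) ^ 2 := by ring
      have e2 : (b ^ (p - 1) - a ^ (p - 1)) * (b - a) =
          (a ^ (p - 1) - b ^ (p - 1)) * (a - b) := by ring
      rw [e1, add_comm b a, e2] at this
      exact this
  -- combine
  have hsplit : a ^ (p - 2) * a ^ 2 - (a ^ (p - 2) + b ^ (p - 2)) * t + b ^ (p - 2) * b ^ 2 =
      (a ^ (p - 1) - b ^ (p - 1)) * (a - b) + (a ^ (p - 2) + b ^ (p - 2)) * (a * b - t) := by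
    have ia := hxid a ha
    have ib := hxid b hb
    nlinarith [ia, ib]
  rw [hsplit]
  nlinarith [hA, hB]



/-- **monotonicity of the p-Laplacian vector field, `1 < p < 2`.**
For every `1 < p < 2` there is `α_p > 0` such that for all `ξ, ξ' ∈ ℝⁿ` with
`|ξ| + |ξ'| ≠ 0`:
`(|ξ|^{p−2}ξ − |ξ'|^{p−2}ξ') · (ξ − ξ') ≥ α_p |ξ − ξ'|² / (|ξ| + |ξ'|)^{2−p}`
(with the convention `|0|^{p−2}·0 = 0`, which is automatic for `Real.rpow`). -/
theorem stmt14 (n : ℕ) (p : ℝ) (hp1 : 1 < p) (hp2 : p < 2) :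
    ∃ α : ℝ, 0 < α ∧
      ∀ ξ ξ' : EuclideanSpace ℝ (Fin n), ‖ξ‖ + ‖ξ'‖ ≠ 0 →
        α * (‖ξ - ξ'‖ ^ (2:ℝ) / (‖ξ‖ + ‖ξ'‖) ^ (2 - p)) ≤
          (inner ℝ (‖ξ‖ ^ (p - 2) • ξ - ‖ξ'‖ ^ (p - 2) • ξ') (ξ - ξ') : ℝ) := by
  refine ⟨p - 1, by linarith, fun ξ ξ' hne => ?_⟩
  set a := ‖ξ‖ with haa
  set b := ‖ξ'‖ with hbb
  have ha : 0 ≤ a := norm_nonneg _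
  have hb : 0 ≤ b := norm_nonneg _
  have hab : 0 < a + b := lt_of_le_of_ne (by linarith) (Ne.symm hne)
  have habp : 0 < (a + b) ^ (2 - p) := Real.rpow_pos_of_pos hab _
  set t : ℝ := inner ℝ ξ ξ' with htt
  have hI : (inner ℝ (a ^ (p - 2) • ξ - b ^ (p - 2) • ξ') (ξ - ξ') : ℝ) =
      a ^ (p - 2) * a ^ 2 - (a ^ (p - 2) + b ^ (p - 2)) * t + b ^ (p - 2) * b ^ 2 := by
    rw [inner_sub_left, inner_sub_right, inner_sub_right, real_inner_smul_left,
      real_inner_smul_left, real_inner_smul_left, real_inner_smul_left,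
      real_inner_self_eq_norm_sq, real_inner_self_eq_norm_sq, real_inner_comm ξ ξ']
    rw [← haa, ← hbb, ← htt]; ring
  have hNorm : ‖ξ - ξ'‖ ^ (2:ℝ) = a ^ 2 - 2 * t + b ^ 2 := by
    rw [show (2:ℝ) = ((2:ℕ):ℝ) by norm_num, Real.rpow_natCast]
    exact norm_sub_sq_real ξ ξ'
  have ht : |t| ≤ a * b := abs_real_inner_le_norm ξ ξ'
  rw [hI, hNorm, mul_div_assoc' (p - 1) _ _, div_le_iff₀ habp]
  exact key p a b t hp1 hp2 ha hb hab ht
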